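/- Let f : X → Y be a compact-preserving function from a Fréchet space X to a Hausdorff space Y. Let SI_f denote the set of points x ∈ X at which f is sequentially infinite, i.e., there exists a sequence (x_n) converging to x whose image {f(x_n) : n ∈ ℕ} is infinite. Then the restriction of f to the subspace SI_f is continuous. -/

import Mathlib

open Filter Topology Set

def CompactPreserving {X Y : Type*} [TopologicalSpace X] [TopologicalSpace Y]
    (f : X → Y) : Prop := ∀ K : Set X, IsCompact K → IsCompact (f '' K)

lemma exists_inj_comp {Y : Type*} (g : ℕ → Y) {S : Set ℕ} (h : (g '' S).Infinite) :
    ∃ n : ℕ → ℕ, (∀ k, n k ∈ S) ∧ Function.Injective (g ∘ n) := by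
  have e := h.natEmbedding
  have hmem : ∀ k, ∃ i, i ∈ S ∧ g i = (e k : Y) := fun k => (e k).2
  choose n hnS hgn using hmem
  refine ⟨n, hnS, fun a b hab => ?_⟩
  have : (e a : Y) = e b := by rw [← hgn a, ← hgn b]; exact hab
  exact e.injective (Subtype.ext this)

lemma tendsto_of_inj_comp {X Y : Type*} [TopologicalSpace X] [TopologicalSpace Y] [T2Space Y]
    {f : X → Y} (hf : CompactPreserving f) {t : ℕ → X} {x : X}
    (ht : Tendsto t atTop (𝓝 x)) (hinj : Function.Injective (f ∘ t)) :
    Tendsto (f ∘ t) atTop (𝓝 (f x)) := by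
  rw [tendsto_nhds]
  intro V hVo hxV
  by_contra hc
  have hfreq : ∃ᶠ n in atTop, f (t n) ∉ V := by
    have := (not_eventually.mp (fun h => hc (eventually_iff.mp h)))
    exact this
  obtain ⟨φ, hφ, hφV⟩ := extraction_of_frequently_atTop hfreq
  set s : ℕ → X := t ∘ φ with hs_def
  have hs : Tendsto s atTop (𝓝 x) := ht.comp hφ.tendsto_atTop
  have hsinj : Function.Injective (f ∘ s) := hinj.comp hφ.injective
  have hK : IsCompact (f '' insert x (range s)) := hf _ hs.isCompact_insert_range
  have himg : f '' insert x (range s) = insert (f x) (range (f ∘ s)) := by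
    rw [image_insert_eq, ← range_comp]
  have hEinf : (range (f ∘ s)).Infinite := infinite_range_of_injective hsinj
  have hEsub : range (f ∘ s) ⊆ f '' insert x (range s) := by
    rw [himg]; exact subset_insert _ _
  obtain ⟨p, hpK, hp⟩ := hEinf.exists_accPt_of_subset_isCompact hK hEsub
  -- p is not in V
  have hpV : p ∉ V := by
    have hcl : p ∈ closure (range (f ∘ s)) :=
      mem_closure_iff_clusterPt.2 (hp.clusterPt)
    have : closure (range (f ∘ s)) ⊆ Vᶜ := by
      apply closure_minimal _ hVo.isClosed_compl
      rintro - ⟨k, rfl⟩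
      exact hφV k
    exact this hcl
  have hpfx : p ≠ f x := fun h => hpV (h ▸ hxV)
  -- p = f (s m) for some m
  have hpE : p ∈ range (f ∘ s) := by
    rcases himg ▸ hpK with h | h
    · exact absurd h hpfx
    · exact h
  obtain ⟨m, hm⟩ := hpE
  -- tail sequence
  set s' : ℕ → X := fun k => s (k + (m + 1)) with hs'_def
  have hs' : Tendsto s' atTop (𝓝 x) := hs.comp (tendsto_add_atTop_nat (m + 1))
  have hK' : IsCompact (f '' insert x (range s')) := hf _ hs'.isCompact_insert_range
  have hK'c : IsClosed (f '' insert x (range s')) := hK'.isClosed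
  -- the finite head
  have hFin : ((f ∘ s) '' (Iic m)).Finite := (finite_Iic m).image _
  -- p ∈ closure of (range (f∘s)) \ {p}
  have hacc : p ∈ closure ((range (f ∘ s)) \ {p}) := by
    rw [accPt_principal_iff_clusterPt] at hp
    exact mem_closure_iff_clusterPt.2 hp
  have hsubset : (range (f ∘ s)) \ {p} ⊆ ((f ∘ s) '' (Iic m) \ {p}) ∪ f '' insert x (range s') := by
    rintro q ⟨⟨k, rfl⟩, hq⟩
    rcases le_or_gt k m with hkm | hkm
    · exact Or.inl ⟨mem_image_of_mem _ hkm, hq⟩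
    · refine Or.inr ?_
      rw [image_insert_eq, ← range_comp]
      refine mem_insert_of_mem _ ⟨k - (m + 1), ?_⟩
      show f (s (k - (m + 1) + (m + 1))) = (f ∘ s) k
      rw [Nat.sub_add_cancel hkm]; rfl
  have hclosed : IsClosed (((f ∘ s) '' (Iic m) \ {p}) ∪ f '' insert x (range s')) :=
    ((hFin.diff (t := {p})).isClosed).union hK'c
  have hpmem := (closure_minimal hsubset hclosed) hacc
  rcases hpmem with h | h
  · exact h.2 rfl
  · rw [image_insert_eq, ← range_comp] at h
    rcases h with h | ⟨k, hk⟩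
    · exact hpfx h
    · -- f (s' k) = p = f (s m): injectivity contradiction
      have : k + (m + 1) = m := hsinj (show (f ∘ s) (k + (m+1)) = (f ∘ s) m from hk.trans hm.symm)
      omega

/-- The set of points at which `f` is sequentially infinite. -/
def SIset {X Y : Type*} [TopologicalSpace X] (f : X → Y) : Set X :=
  {x | ∃ u : ℕ → X, Filter.Tendsto u Filter.atTop (𝓝 x) ∧ (Set.range (fun n => f (u n))).Infinite}

lemma SI_witness {X Y : Type*} [TopologicalSpace X] [TopologicalSpace Y] [T2Space Y]
    {f : X → Y} (hf : CompactPreserving f) {x : X} (hx : x ∈ SIset f) :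
    ∃ v : ℕ → X, Tendsto v atTop (𝓝 x) ∧ Function.Injective (f ∘ v) ∧
      Tendsto (f ∘ v) atTop (𝓝 (f x)) := by
  obtain ⟨u, hu, hinf⟩ := hx
  have h' : ((f ∘ u) '' univ).Infinite := by rw [image_univ]; exact hinf
  obtain ⟨n, -, hninj⟩ := exists_inj_comp (f ∘ u) h'
  have hn : Function.Injective n := fun a b h => hninj (by simp [Function.comp, h])
  have htend : Tendsto (u ∘ n) atTop (𝓝 x) := hu.comp hn.nat_tendsto_atTop
  exact ⟨u ∘ n, htend, hninj, tendsto_of_inj_comp hf htend hninj⟩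

theorem stmt5 {X Y : Type*} [TopologicalSpace X] [TopologicalSpace Y]
    [FrechetUrysohnSpace X] [T2Space Y] (f : X → Y) (hf : CompactPreserving f) :
    Continuous (Set.restrict (SIset f) f) := by
  classical
  rw [continuous_iff_continuousAt]
  rintro ⟨x, hx⟩
  refine (continuousWithinAt_iff_continuousAt_restrict f hx).1 ?_
  show Tendsto f (𝓝[SIset f] x) (𝓝 (f x))
  rw [tendsto_nhds]
  intro V hVo hfxV
  by_contra hc
  have hxcl : x ∈ closure (SIset f ∩ {z | f z ∉ V}) := by
    rw [mem_closure_iff_nhdsWithin_neBot, nhdsWithin_inter']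
    have hc' : ¬ ∀ᶠ z in 𝓝[SIset f] x, f z ∈ V := fun h => hc h
    rw [not_eventually] at hc'
    exact frequently_iff_neBot.1 hc'
  obtain ⟨u, huA, hux⟩ := mem_closure_iff_seq_limit.1 hxcl
  by_cases hR : (range (f ∘ u)).Infinite
  · -- infinitely many values among f (u n): direct contradiction
    obtain ⟨n, -, hninj⟩ := exists_inj_comp (f ∘ u) (S := univ) (by rw [image_univ]; exact hR)
    have hn : Function.Injective n := fun a b h => hninj (by simp only [Function.comp_apply, h])
    have htend : Tendsto (u ∘ n) atTop (𝓝 x) := hux.comp hn.nat_tendsto_atTop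
    have hlim := tendsto_of_inj_comp hf htend hninj
    obtain ⟨i, hi⟩ := (hlim.eventually_mem (hVo.mem_nhds hfxV)).exists
    exact (huA (n i)).2 hi
  · -- finitely many values: one value y₀ occurs infinitely often
    have hRfin : (range (f ∘ u)).Finite := not_infinite.mp hR
    haveI := hRfin.to_subtype
    obtain ⟨y, hy⟩ := Finite.exists_infinite_fiber
      (fun m => (⟨f (u m), mem_range_self m⟩ : ↥(range (f ∘ u))))
    have hM0 : {m | f (u m) = (y : Y)}.Infinite := by
      have h1 := Set.infinite_coe_iff.mp hy
      refine h1.mono fun m hm => ?_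
      have : (⟨f (u m), mem_range_self m⟩ : ↥(range (f ∘ u))) = y := hm
      exact congrArg Subtype.val this
    obtain ⟨φ, hφmono, hφT⟩ :=
      extraction_of_frequently_atTop (Nat.frequently_atTop_iff_infinite.2 hM0)
    set y₀ : Y := (y : Y) with hy₀def
    have hy₀V : y₀ ∉ V := by
      have h2 : f (u (φ 0)) ∉ V := (huA (φ 0)).2
      rw [← hφT 0]
      exact h2
    have hy₀fx : y₀ ≠ f x := fun h => hy₀V (h ▸ hfxV)
    obtain ⟨W, V', hWo, hV'o, hyW, hfxV', hWV'⟩ := t2_separation hy₀fx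
    set w : ℕ → X := u ∘ φ with hwdef
    have hwx : Tendsto w atTop (𝓝 x) := hux.comp hφmono.tendsto_atTop
    have hwSI : ∀ k, w k ∈ SIset f := fun k => (huA (φ k)).1
    have hwy : ∀ k, f (w k) = y₀ := fun k => hφT k
    -- witnesses at each w k, with values in W
    have hwit : ∀ k, ∃ v : ℕ → X, Tendsto v atTop (𝓝 (w k)) ∧
        Function.Injective (f ∘ v) ∧ (∀ j, f (v j) ∈ W) := by
      intro k
      obtain ⟨v, hv, hvinj, hvt⟩ := SI_witness hf (hwSI k)
      have hev : ∀ᶠ j in atTop, f (v j) ∈ W :=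
        hvt.eventually_mem (hWo.mem_nhds (by rw [hwy k]; exact hyW))
      obtain ⟨J, hJ⟩ := eventually_atTop.1 hev
      refine ⟨fun j => v (j + J), hv.comp (tendsto_add_atTop_nat J),
        ?_, fun j => hJ _ (Nat.le_add_left J j)⟩
      exact hvinj.comp (add_left_injective J)
    choose p hp1 hp2 hp3 using hwit
    -- fresh-value selector
    have key : ∀ (k : ℕ) (F : Finset Y), ∃ i, f (p k i) ∉ F := by
      intro k F
      by_contra h
      push_neg at h
      have hsub : range (f ∘ p k) ⊆ ↑F := by rintro - ⟨i, rfl⟩; exact h i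
      exact (infinite_range_of_injective (hp2 k)) (F.finite_toSet.subset hsub)
    let e : ℕ ≃ ℕ × ℕ := (Denumerable.eqv (ℕ × ℕ)).symm
    let st : ℕ → Finset Y := fun m =>
      Nat.rec ∅ (fun m' s => insert (f (p (e m').1 (Classical.choose (key (e m').1 s)))) s) m
    let I : ℕ → ℕ := fun m => Classical.choose (key (e m).1 (st m))
    let b : ℕ → X := fun m => p (e m).1 (I m)
    have hst_succ : ∀ m, st (m + 1) = insert (f (b m)) (st m) := fun m => rfl
    have hb_not : ∀ m, f (b m) ∉ st m := fun m => Classical.choose_spec (key (e m).1 (st m))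
    have hst_mono : ∀ m m', m ≤ m' → st m ⊆ st m' := by
      intro m m' h
      induction m', h using Nat.le_induction with
      | base => exact Finset.Subset.refl _
      | succ n hn ih =>
        rw [hst_succ n]
        exact ih.trans (Finset.subset_insert _ _)
    have hb_mem : ∀ m, f (b m) ∈ st (m + 1) := fun m => by
      rw [hst_succ]; exact Finset.mem_insert_self _ _
    have hfbinj : Function.Injective (f ∘ b) := by
      have aux : ∀ a c, a < c → (f ∘ b) a ≠ (f ∘ b) c := by
        intro a c hac h
        have hm : f (b a) ∈ st c := hst_mono (a + 1) c hac (hb_mem a)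
        rw [show f (b a) = f (b c) from h] at hm
        exact hb_not c hm
      intro a c h
      rcases lt_trichotomy a c with hlt | heq | hlt
      · exact absurd h (aux a c hlt)
      · exact heq
      · exact absurd h.symm (aux c a hlt)
    have hfbW : ∀ m, f (b m) ∈ W := fun m => hp3 (e m).1 (I m)
    have hbk : ∀ k j, b (e.symm (k, j)) = p k (I (e.symm (k, j))) := by
      intro k j
      show p (e (e.symm (k, j))).1 (I (e.symm (k, j))) = p k (I (e.symm (k, j)))
      rw [Equiv.apply_symm_apply]
    have hq_tend : ∀ k, Tendsto (fun j => b (e.symm (k, j))) atTop (𝓝 (w k)) := by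
      intro k
      have hidx : Function.Injective (fun j => I (e.symm (k, j))) := by
        intro a c h
        have hfb : (f ∘ b) (e.symm (k, a)) = (f ∘ b) (e.symm (k, c)) := by
          show f (b (e.symm (k, a))) = f (b (e.symm (k, c)))
          rw [hbk k a, hbk k c]
          simp only at h
          rw [h]
        have h2 := e.symm.injective (hfbinj hfb)
        exact (Prod.ext_iff.1 h2).2
      have heq : (fun j => b (e.symm (k, j))) = (p k) ∘ (fun j => I (e.symm (k, j))) :=
        funext fun j => hbk k j
      rw [heq]
      exact (hp1 k).comp hidx.nat_tendsto_atTop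
    set Z : Set X := {z | x ∈ closure {z}} with hZdef
    by_cases hZinf : ∃ k, {j | b (e.symm (k, j)) ∈ Z}.Infinite
    · -- infinitely many points of one approximating sequence are "adherent" to x
      obtain ⟨k, hk⟩ := hZinf
      obtain ⟨ψ, hψmono, hψZ⟩ :=
        extraction_of_frequently_atTop (Nat.frequently_atTop_iff_infinite.2 hk)
      set r : ℕ → X := fun i => b (e.symm (k, ψ i)) with hrdef
      have hrx : Tendsto r atTop (𝓝 x) := by
        rw [tendsto_nhds]
        intro U hUo hxU
        refine Eventually.of_forall fun i => ?_
        have hcl : x ∈ closure {r i} := hψZ i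
        rcases mem_closure_iff.1 hcl U hUo hxU with ⟨z, hzU, hz⟩
        rw [mem_singleton_iff] at hz
        exact hz ▸ hzU
      have hrinj : Function.Injective (f ∘ r) := by
        intro a c h
        have h2 := e.symm.injective (hfbinj h)
        exact hψmono.injective (Prod.ext_iff.1 h2).2
      have hlim := tendsto_of_inj_comp hf hrx hrinj
      obtain ⟨i, hi⟩ := (hlim.eventually_mem (hV'o.mem_nhds hfxV')).exists
      exact Set.disjoint_left.mp hWV' (hfbW (e.symm (k, ψ i))) hi
    · push_neg at hZinf
      have hfin : ∀ k, {j | b (e.symm (k, j)) ∈ Z}.Finite :=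
        fun k => hZinf k
      have hbound : ∀ k, ∃ N : ℕ, ∀ j, N ≤ j → b (e.symm (k, j)) ∉ Z := by
        intro k
        obtain ⟨N, hN⟩ := (hfin k).bddAbove
        exact ⟨N + 1, fun j hj hmem => by have := hN hmem; omega⟩
      choose N hN using hbound
      set B : Set X := {z | ∃ k j, N k ≤ j ∧ z = b (e.symm (k, j))} with hBdef
      have hwcl : ∀ k, w k ∈ closure B := by
        intro k
        have htend : Tendsto (fun j => b (e.symm (k, j + N k))) atTop (𝓝 (w k)) :=
          (hq_tend k).comp (tendsto_add_atTop_nat (N k))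
        exact mem_closure_of_tendsto htend
          (Eventually.of_forall fun j => ⟨k, j + N k, Nat.le_add_left _ _, rfl⟩)
      have hxclB : x ∈ closure B := by
        have h3 := mem_closure_of_tendsto hwx (Eventually.of_forall fun k => hwcl k)
        rwa [closure_closure] at h3
      obtain ⟨c, hcB, hcx⟩ := mem_closure_iff_seq_limit.1 hxclB
      have hcW : ∀ m, f (c m) ∈ W := by
        intro m
        obtain ⟨k, j, -, hcm⟩ := hcB m
        rw [hcm]
        exact hfbW _
      by_cases hrc : (range (f ∘ c)).Infinite
      · obtain ⟨n, -, hninj⟩ := exists_inj_comp (f ∘ c) (S := univ) (by rw [image_univ]; exact hrc)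
        have hn : Function.Injective n := fun a b' h => hninj (by simp only [Function.comp_apply, h])
        have htend : Tendsto (c ∘ n) atTop (𝓝 x) := hcx.comp hn.nat_tendsto_atTop
        have hlim := tendsto_of_inj_comp hf htend hninj
        obtain ⟨i, hi⟩ := (hlim.eventually_mem (hV'o.mem_nhds hfxV')).exists
        exact Set.disjoint_left.mp hWV' (hcW (n i)) hi
      · have hRfin' : (range (f ∘ c)).Finite := not_infinite.mp hrc
        haveI := hRfin'.to_subtype
        obtain ⟨d, hd⟩ := Finite.exists_infinite_fiber
          (fun m => (⟨f (c m), mem_range_self m⟩ : ↥(range (f ∘ c))))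
        have hM : {m | f (c m) = (d : Y)}.Infinite := by
          have h1 := Set.infinite_coe_iff.mp hd
          refine h1.mono fun m hm => ?_
          have : (⟨f (c m), mem_range_self m⟩ : ↥(range (f ∘ c))) = d := hm
          exact congrArg Subtype.val this
        have hinjB : ∀ z z', z ∈ B → z' ∈ B → f z = f z' → z = z' := by
          rintro z z' ⟨k, j, -, rfl⟩ ⟨k', j', -, rfl⟩ h
          have h2 : (f ∘ b) (e.symm (k, j)) = (f ∘ b) (e.symm (k', j')) := h
          rw [hfbinj h2]
        obtain ⟨m₀, hm₀⟩ := hM.nonempty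
        have hconst : ∀ m, f (c m) = (d : Y) → c m = c m₀ := fun m hm =>
          hinjB _ _ (hcB m) (hcB m₀) (by rw [hm, hm₀])
        obtain ⟨ψ, hψmono, hψM⟩ :=
          extraction_of_frequently_atTop (Nat.frequently_atTop_iff_infinite.2 hM)
        have hxcl0 : x ∈ closure {c m₀} := by
          apply mem_closure_of_tendsto (hcx.comp hψmono.tendsto_atTop)
          exact Eventually.of_forall fun i => by
            show c (ψ i) ∈ ({c m₀} : Set X)
            rw [hconst _ (hψM i)]
            exact rfl
        obtain ⟨k, j, hjN, hcm0⟩ := hcB m₀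
        exact hN k j hjN (by rw [← hcm0]; exact hxcl0)
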